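/- In the setting of the previous statement (group Lasso, y = Xβ* + W, (1/(nT))‖XᵀW‖_{2,∞} ≤ λ/2), let φ_max be the largest eigenvalue of XᵀX/n. Then the number of nonzero blocks of any minimizer β̂ satisfies M(β̂) ≤ (4 φ_max/(λ² n T²)) · ‖X(β̂ − β*)‖², where M(β̂) = |{j : β̂^j ≠ 0}|. -/

import Mathlib

open scoped BigOperators Classical
open Matrix

noncomputable def blk {M T : ℕ} (β : Fin M × Fin T → ℝ) (j : Fin M) :
    EuclideanSpace ℝ (Fin T) := WithLp.toLp 2 (fun t => β (j, t))

noncomputable def norm21 {M T : ℕ} (β : Fin M × Fin T → ℝ) : ℝ := ∑ j, ‖blk β j‖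

noncomputable def norm2inf {M T : ℕ} (β : Fin M × Fin T → ℝ) : ℝ :=
  ‖(fun j => ‖blk β j‖ : Fin M → ℝ)‖

private lemma norm_sq_euc {T : ℕ} (x : EuclideanSpace ℝ (Fin T)) :
    ‖x‖ ^ 2 = ∑ t, x t ^ 2 := by
  rw [EuclideanSpace.norm_eq, Real.sq_sqrt (by positivity)]
  simp [Real.norm_eq_abs, sq_abs]

private lemma adj {N : ℕ} {K : Type*} [Fintype K] (X : Matrix (Fin N) K ℝ)
    (u : Fin N → ℝ) (v : K → ℝ) :
    ∑ i, X.mulVec v i * u i = ∑ x, v x * Xᵀ.mulVec u x := by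
  simp only [Matrix.mulVec, dotProduct, Finset.sum_mul, Finset.mul_sum,
    transpose_apply]
  rw [Finset.sum_comm]
  exact Finset.sum_congr rfl fun i _ => Finset.sum_congr rfl fun x _ => by ring

set_option maxHeartbeats 1000000 in
theorem stmt_13 (n T M : ℕ) (hn : 0 < n) (hT : 0 < T)
    (X : Matrix (Fin (n * T)) (Fin M × Fin T) ℝ)
    (βstar βhat : Fin M × Fin T → ℝ) (W : Fin (n * T) → ℝ)
    (y : Fin (n * T) → ℝ) (hy : y = X.mulVec βstar + W)
    (lam : ℝ) (hlam : 0 < lam)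
    (hmin : ∀ β : Fin M × Fin T → ℝ,
        (1 / (n * T : ℝ)) * ∑ i, (X.mulVec βhat i - y i) ^ 2 +
          2 * lam * norm21 βhat ≤
        (1 / (n * T : ℝ)) * ∑ i, (X.mulVec β i - y i) ^ 2 + 2 * lam * norm21 β)
    (hW : (1 / (n * T : ℝ)) * norm2inf (Xᵀ.mulVec W) ≤ lam / 2)
    (φmax : ℝ)
    (hφ : ∀ v : Fin M × Fin T → ℝ,
        ∑ i, (X.mulVec v i) ^ 2 ≤ φmax * n * ∑ x, (v x) ^ 2) :
    ((Finset.univ.filter (fun j => blk βhat j ≠ 0)).card : ℝ) ≤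
      (4 * φmax / (lam ^ 2 * n * (T : ℝ) ^ 2)) *
        ∑ i, (X.mulVec βhat i - X.mulVec βstar i) ^ 2 := by
  have hNT : (0:ℝ) < (n : ℝ) * T := by positivity
  set NT : ℝ := (n : ℝ) * T with hNTdef
  set G : Fin M × Fin T → ℝ := Xᵀ.mulVec (fun i => y i - X.mulVec βhat i) with hGdef
  set F : Fin M × Fin T → ℝ := Xᵀ.mulVec (X.mulVec (βhat - βstar)) with hFdef
  -- Step 1: KKT-type lower bound for active blocks
  have key : ∀ j : Fin M, blk βhat j ≠ 0 → lam * NT ≤ ‖blk G j‖ := by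
    intro j hj
    have hc : 0 < ‖blk βhat j‖ := norm_pos_iff.mpr hj
    set c : ℝ := ‖blk βhat j‖ with hcdef
    set e : Fin M × Fin T → ℝ := fun p => if p.1 = j then βhat p else 0 with hedef
    set A : Fin (n*T) → ℝ := X.mulVec βhat with hAdef
    set B : Fin (n*T) → ℝ := X.mulVec e with hBdef
    set a : ℝ := ∑ i, B i * (A i - y i) with hadef
    set b : ℝ := ∑ i, B i ^ 2 with hbdef
    have hb : 0 ≤ b := Finset.sum_nonneg fun i _ => sq_nonneg _
    have main : ∀ ε : ℝ, -1 ≤ ε → ε < 0 → 2 * lam * c * NT ≤ -(2*a) - ε * b := by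
      intro ε hε1 hε2
      have h := hmin (fun p => βhat p + ε * e p)
      have hmv : X.mulVec (fun p => βhat p + ε * e p) = fun i => A i + ε * B i := by
        funext i
        simp only [hAdef, hBdef, Matrix.mulVec, dotProduct, mul_add,
          Finset.sum_add_distrib, Finset.mul_sum]
        congr 1
        exact Finset.sum_congr rfl fun x _ => by ring
      have hsq : ∑ i, (X.mulVec (fun p => βhat p + ε * e p) i - y i) ^ 2
          = (∑ i, (A i - y i) ^ 2) + (2*ε*a + ε^2*b) := by
        rw [hmv]
        simp only [hadef, hbdef, Finset.mul_sum]
        rw [← Finset.sum_add_distrib, ← Finset.sum_add_distrib]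
        exact Finset.sum_congr rfl fun i _ => by ring
      have hnorm : norm21 (fun p => βhat p + ε * e p) = norm21 βhat + ε * c := by
        have hblk_ne : ∀ j' : Fin M, j' ≠ j →
            blk (fun p => βhat p + ε * e p) j' = blk βhat j' := by
          intro j' hj'
          ext t
          simp [blk, hedef, hj']
        have hblk_j : blk (fun p => βhat p + ε * e p) j = (1+ε) • blk βhat j := by
          ext t
          simp [blk, hedef]
          ring
        unfold norm21
        rw [← Finset.sum_erase_add _ _ (Finset.mem_univ j),
            ← Finset.sum_erase_add _ (fun j' => ‖blk βhat j'‖) (Finset.mem_univ j)]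
        rw [Finset.sum_congr rfl
          (fun j' hj' => by rw [hblk_ne j' (Finset.ne_of_mem_erase hj')])]
        rw [hblk_j, norm_smul]
        have h1 : ‖(1+ε)‖ = 1 + ε := by
          rw [Real.norm_eq_abs, abs_of_nonneg (by linarith)]
        rw [h1, ← hcdef]
        ring
      rw [hsq, hnorm] at h
      have h2 : 0 ≤ (1/NT) * (2*ε*a + ε^2*b) + 2*lam*(ε*c) := by
        have hL : (1/NT) * ((∑ i, (A i - y i)^2) + (2*ε*a + ε^2*b))
              + 2*lam*(norm21 βhat + ε*c)
            = ((1/NT) * (∑ i, (A i - y i)^2) + 2*lam*norm21 βhat)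
              + ((1/NT) * (2*ε*a + ε^2*b) + 2*lam*(ε*c)) := by ring
        rw [hL] at h
        linarith
      have h3 := mul_le_mul_of_nonneg_left h2 hNT.le
      have h4 : NT * ((1/NT) * (2*ε*a + ε^2*b) + 2*lam*(ε*c))
          = (2*ε*a + ε^2*b) + 2*lam*(ε*c)*NT := by
        field_simp <;> ring
      rw [mul_zero, h4] at h3
      -- h3 : 0 ≤ ε * (2*a + ε*b + 2*lam*c*NT)
      nlinarith [h3, hε2]
    have hlim : 2 * lam * c * NT ≤ -(2*a) := by
      refine le_of_forall_pos_le_add fun δ hδ => ?_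
      have hb1 : (0:ℝ) < b + 1 := by linarith
      set ε : ℝ := -(min 1 (δ/(b+1))) with hεdef
      have hmin0 : 0 < min 1 (δ/(b+1)) := lt_min one_pos (div_pos hδ hb1)
      have hε1 : -1 ≤ ε := by
        have := min_le_left 1 (δ/(b+1)); simp only [hεdef]; linarith
      have hε2 : ε < 0 := by simp only [hεdef]; linarith
      have h5 := main ε hε1 hε2
      have h6 : -ε * b ≤ δ := by
        have h7 : min 1 (δ/(b+1)) * b ≤ (δ/(b+1)) * b :=
          mul_le_mul_of_nonneg_right (min_le_right _ _) hb
        have h8 : (δ/(b+1)) * b ≤ δ := by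
          rw [div_mul_eq_mul_div, div_le_iff₀ hb1]
          nlinarith
        simp only [hεdef]
        linarith
      linarith
    -- identify -a with the inner product against block j of G
    have hsum0 : ∑ i, B i * (y i - A i) + a = 0 := by
      rw [hadef, ← Finset.sum_add_distrib]
      exact Finset.sum_eq_zero fun i _ => by ring
    have hadj : ∑ i, B i * (y i - A i) = ∑ x, e x * G x := by
      rw [hBdef, hGdef]
      exact adj X (fun i => y i - A i) e
    have hblocksum : ∑ x, e x * G x = ∑ t, βhat (j, t) * G (j, t) := by
      rw [Fintype.sum_prod_type]
      have h9 : ∀ j' : Fin M, (∑ t, e (j', t) * G (j', t))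
          = if j' = j then ∑ t, βhat (j, t) * G (j, t) else 0 := by
        intro j'
        by_cases h : j' = j
        · subst h; simp [hedef]
        · simp [hedef, h]
      rw [Finset.sum_congr rfl fun j' _ => h9 j']
      simp
    have hip : ∑ t, βhat (j, t) * G (j, t) ≤ c * ‖blk G j‖ := by
      have h10 : (inner ℝ (blk βhat j) (blk G j) : ℝ) = ∑ t, βhat (j, t) * G (j, t) := by
        simp [blk, PiLp.inner_apply, RCLike.inner_apply, mul_comm]
      rw [← h10]
      exact real_inner_le_norm _ _
    have h11 : lam * NT * c ≤ ‖blk G j‖ * c := by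
      linarith [hlim, hsum0, hadj, hblocksum, hip]
    exact le_of_mul_le_mul_right h11 hc
  -- Step 2: bound on noise blocks and transfer to F
  have hWblk : ∀ j : Fin M, ‖blk (Xᵀ.mulVec W) j‖ ≤ lam / 2 * NT := by
    intro j
    have h1 : ‖blk (Xᵀ.mulVec W) j‖ ≤ norm2inf (Xᵀ.mulVec W) := by
      have h2 := norm_le_pi_norm (fun j => ‖blk (Xᵀ.mulVec W) j‖) j
      simpa [norm2inf, Real.norm_eq_abs, abs_of_nonneg (norm_nonneg _)] using h2
    have h3 := mul_le_mul_of_nonneg_left hW hNT.le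
    have h4 : NT * ((1/NT) * norm2inf (Xᵀ.mulVec W)) = norm2inf (Xᵀ.mulVec W) := by
      field_simp
    rw [h4] at h3
    linarith
  have hGFblk : ∀ j : Fin M, blk G j = blk (Xᵀ.mulVec W) j - blk F j := by
    intro j
    ext t
    have h1 : (fun i => y i - X.mulVec βhat i) = W - X.mulVec (βhat - βstar) := by
      funext i
      rw [hy]
      simp [Matrix.mulVec_sub]
      ring
    rw [hGdef, h1, Matrix.mulVec_sub]
    simp [blk, hFdef]
  have hFblk : ∀ j : Fin M, blk βhat j ≠ 0 → lam / 2 * NT ≤ ‖blk F j‖ := by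
    intro j hj
    have h1 := key j hj
    have h2 : ‖blk G j‖ ≤ ‖blk (Xᵀ.mulVec W) j‖ + ‖blk F j‖ := by
      rw [hGFblk j]
      exact norm_sub_le _ _
    have h3 := hWblk j
    linarith
  -- Step 3: summation and spectral bound
  set K : Finset (Fin M) := Finset.univ.filter (fun j => blk βhat j ≠ 0) with hKdef
  set S : ℝ := ∑ x, F x ^ 2 with hSdef
  set E : ℝ := ∑ i, (X.mulVec βhat i - X.mulVec βstar i) ^ 2 with hEdef
  have hE0 : 0 ≤ E := Finset.sum_nonneg fun i _ => sq_nonneg _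
  have hS0 : 0 ≤ S := Finset.sum_nonneg fun x _ => sq_nonneg _
  have hEeq : ∑ i, (X.mulVec (βhat - βstar) i) ^ 2 = E := by
    rw [hEdef]
    exact Finset.sum_congr rfl fun i _ => by rw [Matrix.mulVec_sub]; simp
  have hcard : (K.card : ℝ) * (lam / 2 * NT) ^ 2 ≤ S := by
    have h1 : ∀ j ∈ K, (lam / 2 * NT) ^ 2 ≤ ‖blk F j‖ ^ 2 := by
      intro j hjK
      have hj : blk βhat j ≠ 0 := (Finset.mem_filter.mp hjK).2
      have := hFblk j hj
      have hpos : 0 ≤ lam / 2 * NT := by positivity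
      exact pow_le_pow_left₀ hpos this 2
    have h2 := Finset.card_nsmul_le_sum K (fun j => ‖blk F j‖ ^ 2) ((lam / 2 * NT) ^ 2) h1
    have h3 : ∑ j ∈ K, ‖blk F j‖ ^ 2 ≤ ∑ j, ‖blk F j‖ ^ 2 :=
      Finset.sum_le_sum_of_subset_of_nonneg (Finset.subset_univ _)
        (fun _ _ _ => by positivity)
    have h4 : ∑ j, ‖blk F j‖ ^ 2 = S := by
      rw [hSdef, Fintype.sum_prod_type]
      exact Finset.sum_congr rfl fun j _ => norm_sq_euc (blk F j)
    rw [nsmul_eq_mul] at h2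
    linarith
  have hCS : S ^ 2 ≤ (φmax * n * S) * E := by
    have h1 : S = ∑ i, X.mulVec F i * X.mulVec (βhat - βstar) i := by
      rw [adj X (X.mulVec (βhat - βstar)) F, ← hFdef, hSdef]
      exact Finset.sum_congr rfl fun x _ => by ring
    have h2 : (∑ i, X.mulVec F i * X.mulVec (βhat - βstar) i) ^ 2
        ≤ (∑ i, X.mulVec F i ^ 2) * ∑ i, X.mulVec (βhat - βstar) i ^ 2 :=
      Finset.sum_mul_sq_le_sq_mul_sq _ _ _
    have h3 := hφ F
    rw [hEeq] at h2
    calc S ^ 2 = (∑ i, X.mulVec F i * X.mulVec (βhat - βstar) i) ^ 2 := by rw [h1]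
      _ ≤ (∑ i, X.mulVec F i ^ 2) * E := h2
      _ ≤ (φmax * n * S) * E := by
          have := hφ F
          rw [← hSdef] at this
          exact mul_le_mul_of_nonneg_right this hE0
  have hφE : 0 ≤ φmax * E := by
    rcases lt_or_ge 0 E with hE1 | hE1
    · have h1 := hφ (βhat - βstar)
      rw [hEeq] at h1
      have hD : 0 ≤ ∑ x, ((βhat - βstar) x) ^ 2 := Finset.sum_nonneg fun x _ => sq_nonneg _
      have hφpos : 0 < φmax := by
        by_contra hφn
        push_neg at hφn
        have hnn : (0:ℝ) ≤ (n:ℝ) := by positivity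
        have h2 := mul_nonneg (mul_nonneg (neg_nonneg.mpr hφn) hnn) hD
        nlinarith
      exact (mul_pos hφpos hE1).le
    · have : E = 0 := le_antisymm hE1 hE0
      rw [this, mul_zero]
  have hdenom : (0:ℝ) < lam ^ 2 * n * (T:ℝ) ^ 2 := by positivity
  rw [div_mul_eq_mul_div, le_div_iff₀ hdenom]
  by_cases hS' : S = 0
  · have hK0 : (K.card : ℝ) = 0 := by
      have hpos : 0 < (lam / 2 * NT) ^ 2 := by positivity
      rw [hS'] at hcard
      by_contra h
      have hKpos : 0 < (K.card : ℝ) := lt_of_le_of_ne (Nat.cast_nonneg _) (Ne.symm h)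
      nlinarith [mul_pos hKpos hpos]
    rw [hK0, zero_mul]
    linarith [hφE]
  · have hSpos : 0 < S := lt_of_le_of_ne hS0 (Ne.symm hS')
    have h5' : S * S ≤ (φmax * n * E) * S := by
      calc S * S = S ^ 2 := by ring
        _ ≤ (φmax * n * S) * E := hCS
        _ = (φmax * n * E) * S := by ring
    have h5 : S ≤ φmax * n * E := le_of_mul_le_mul_right h5' hSpos
    have hn0 : (0:ℝ) < n := by exact_mod_cast hn
    have hchain : (K.card : ℝ) * (lam ^ 2 * n * (T:ℝ) ^ 2) * n ≤ (4 * φmax * E) * n := by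
      have e1 : (K.card : ℝ) * (lam ^ 2 * (n:ℝ) * (T:ℝ) ^ 2) * n
          = 4 * ((K.card : ℝ) * (lam / 2 * NT) ^ 2) := by rw [hNTdef]; ring
      have e2 : (4 * φmax * E) * (n:ℝ) = 4 * (φmax * n * E) := by ring
      rw [e1, e2]
      linarith [hcard, h5]
    exact le_of_mul_le_mul_right hchain hn0
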